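/- There exist Borel probability measures μ and ν on [0,1] ⊂ ℝ with dim_F μ = 0 and dim_F ν = 0 but dim_F(μ + ν) = 1. Concretely, one can take dμ = g dx and dν = h dx where g(x) = 1 + Σ_{k≥1} 2^{-k} sin(2π·2^{k²} x) and h(x) = 2 − g(x). -/

import Mathlib

open MeasureTheory Real Set
open scoped NNReal ENNReal

noncomputable section

noncomputable def FT1 (μ : Measure ℝ) (ξ : ℝ) : ℂ :=
  ∫ x, Complex.exp (-(2 * Real.pi * Complex.I * (ξ * x : ℝ))) ∂μ

/-- Fourier dimension of a finite Borel measure on `ℝ`. -/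
noncomputable def fDim1 (μ : Measure ℝ) : ℝ :=
  sSup {s : ℝ | 0 ≤ s ∧ s ≤ 1 ∧ ∃ C : ℝ, ∀ ξ : ℝ, ξ ≠ 0 →
    ‖FT1 μ ξ‖ ≤ C * ‖ξ‖ ^ (-s / 2)}

/-- The density `g(x) = 1 + ∑_{k ≥ 1} 2^{-k} sin(2π 2^{k²} x)`. -/
noncomputable def gdens (x : ℝ) : ℝ :=
  1 + ∑' k : ℕ, (2 : ℝ) ^ (-((k : ℝ) + 1)) *
    Real.sin (2 * Real.pi * 2 ^ (((k : ℝ) + 1) ^ 2) * x)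

noncomputable def hdens (x : ℝ) : ℝ := 2 - gdens x


def Aco (k : ℕ) : ℝ := ((2:ℝ) ^ (k+1))⁻¹
def Nfr (k : ℕ) : ℕ := 2 ^ ((k+1)^2)

lemma Aco_eq (k : ℕ) : (2:ℝ) ^ (-((k:ℝ)+1)) = Aco k := by
  rw [Real.rpow_neg (by norm_num), show ((k:ℝ)+1) = ((k+1 : ℕ):ℝ) by push_cast; ring,
    Real.rpow_natCast, Aco]

lemma Nfr_eq (k : ℕ) : (2:ℝ) ^ (((k:ℝ)+1)^2) = (Nfr k : ℝ) := by
  rw [show (((k:ℝ)+1)^2) = (((k+1)^2 : ℕ):ℝ) by push_cast; ring, Real.rpow_natCast, Nfr]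
  push_cast; ring

lemma Aco_pos (k : ℕ) : 0 < Aco k := by unfold Aco; positivity

lemma summable_Aco : Summable Aco := by
  have : Aco = fun k => (1/2 : ℝ) * (1/2)^k := by
    funext k; unfold Aco; rw [pow_succ, one_div, inv_pow, mul_inv]; ring
  rw [this]
  exact (summable_geometric_two).mul_left _

lemma tsum_Aco : ∑' k, Aco k = 1 := by
  have : Aco = fun k => (1/2 : ℝ) * (1/2)^k := by
    funext k; unfold Aco; rw [pow_succ, one_div, inv_pow, mul_inv]; ring
  rw [this, tsum_mul_left, tsum_geometric_two]
  norm_num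

lemma gdens_eq (x : ℝ) :
    gdens x = 1 + ∑' k : ℕ, Aco k * Real.sin (2 * π * (Nfr k) * x) := by
  unfold gdens
  congr 1
  exact tsum_congr fun k => by rw [Aco_eq, Nfr_eq]

lemma summable_term (x : ℝ) :
    Summable (fun k => Aco k * Real.sin (2 * π * (Nfr k) * x)) := by
  apply Summable.of_norm
  apply summable_Aco.of_nonneg_of_le (fun k => norm_nonneg _)
  intro k
  rw [norm_mul, Real.norm_eq_abs, Real.norm_eq_abs, abs_of_pos (Aco_pos k)]
  calc Aco k * |Real.sin _| ≤ Aco k * 1 := by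
        exact mul_le_mul_of_nonneg_left (Real.abs_sin_le_one _) (Aco_pos k).le
    _ = Aco k := mul_one _

lemma tsum_term_abs_le (x : ℝ) :
    |∑' k : ℕ, Aco k * Real.sin (2 * π * (Nfr k) * x)| ≤ 1 := by
  have hs : Summable (fun k => ‖Aco k * Real.sin (2 * π * (Nfr k) * x)‖) := by
    simp only [Real.norm_eq_abs]; exact (summable_term x).abs
  have h1 := norm_tsum_le_tsum_norm hs
  rw [Real.norm_eq_abs] at h1
  refine h1.trans ?_
  rw [← tsum_Aco]
  apply Summable.tsum_le_tsum _ hs summable_Aco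
  intro k
  rw [Real.norm_eq_abs, abs_mul, abs_of_pos (Aco_pos k)]
  calc Aco k * |Real.sin _| ≤ Aco k * 1 :=
        mul_le_mul_of_nonneg_left (Real.abs_sin_le_one _) (Aco_pos k).le
    _ = Aco k := mul_one _

lemma gdens_nonneg (x : ℝ) : 0 ≤ gdens x := by
  rw [gdens_eq]
  have := (abs_le.1 (tsum_term_abs_le x)).1
  linarith

lemma gdens_le_two (x : ℝ) : gdens x ≤ 2 := by
  rw [gdens_eq]
  have := (abs_le.1 (tsum_term_abs_le x)).2
  linarith

lemma hdens_nonneg (x : ℝ) : 0 ≤ hdens x := by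
  unfold hdens; linarith [gdens_le_two x]

lemma hdens_le_two (x : ℝ) : hdens x ≤ 2 := by
  unfold hdens; linarith [gdens_nonneg x]

lemma continuous_gdens : Continuous gdens := by
  have : Continuous (fun x => ∑' k : ℕ, (2 : ℝ) ^ (-((k : ℝ) + 1)) *
      Real.sin (2 * Real.pi * 2 ^ (((k : ℝ) + 1) ^ 2) * x)) := by
    apply continuous_tsum (u := Aco)
    · intro k; fun_prop
    · exact summable_Aco
    · intro k x
      rw [Aco_eq, norm_mul, Real.norm_eq_abs, Real.norm_eq_abs, abs_of_pos]
      · calc Aco k * |Real.sin _| ≤ Aco k * 1 :=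
              mul_le_mul_of_nonneg_left (Real.abs_sin_le_one _) (Aco_pos k).le
          _ = Aco k := mul_one _
      · exact Aco_pos k
  unfold gdens
  fun_prop

lemma continuous_hdens : Continuous hdens := by
  unfold hdens; exact continuous_const.sub continuous_gdens

-- Part 2: integral computations

lemma sin_integral_zero (n : ℕ) : ∫ x in (0:ℝ)..1, Real.sin (2*π*n*x) = 0 := by
  rcases Nat.eq_zero_or_pos n with h | h
  · simp [h]
  · have hc : (2*π*(n:ℝ)) ≠ 0 := by
      have := Real.pi_pos
      positivity
    rw [intervalIntegral.integral_comp_mul_left (f := Real.sin) hc]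
    rw [mul_zero, mul_one, integral_sin]
    rw [show (2*π*(n:ℝ)) = (n:ℝ) * (2*π) by ring, Real.cos_nat_mul_two_pi]
    simp

lemma exp_orth (m : ℤ) :
    ∫ x in (0:ℝ)..1, Complex.exp (2 * (π:ℂ) * Complex.I * (m:ℂ) * (x:ℂ)) =
      if m = 0 then 1 else 0 := by
  rcases eq_or_ne m 0 with h | h
  · simp [h]
  · rw [if_neg h]
    have hc : (2 * (π:ℂ) * Complex.I * (m:ℂ)) ≠ 0 := by
      apply mul_ne_zero (mul_ne_zero (mul_ne_zero two_ne_zero _) Complex.I_ne_zero)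
      · exact_mod_cast Int.cast_ne_zero.2 h
      · exact_mod_cast Complex.ofReal_ne_zero.2 Real.pi_ne_zero
    rw [integral_exp_mul_complex hc]
    have h1 : (2 * (π:ℂ) * Complex.I * (m:ℂ)) * (1:ℝ) = (m:ℂ) * (2 * π * Complex.I) := by
      push_cast; ring
    have h0 : (2 * (π:ℂ) * Complex.I * (m:ℂ)) * (0:ℝ) = 0 := by push_cast; ring
    rw [h1, h0, Complex.exp_int_mul_two_pi_mul_I, Complex.exp_zero, sub_self, zero_div]

lemma sin_orth (n m : ℕ) (hn : 0 < n) (hm : 0 < m) :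
    ∫ x in (0:ℝ)..1, (Real.sin (2 * π * n * x) : ℂ) *
      Complex.exp (-(2 * (π:ℂ) * Complex.I * (m:ℂ) * (x:ℂ))) =
      if n = m then -(Complex.I / 2) else 0 := by
  have key : ∀ x : ℝ, (Real.sin (2 * π * n * x) : ℂ) *
      Complex.exp (-(2 * (π:ℂ) * Complex.I * (m:ℂ) * (x:ℂ))) =
      (Complex.I/2) * (Complex.exp (2 * (π:ℂ) * Complex.I * ((-(n:ℤ)-m : ℤ):ℂ) * (x:ℝ)) -
        Complex.exp (2 * (π:ℂ) * Complex.I * (((n:ℤ)-m : ℤ):ℂ) * (x:ℝ))) := by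
    intro x
    rw [Complex.ofReal_sin, Complex.sin,
      show (2 * (π:ℂ) * Complex.I * ((-(n:ℤ)-m : ℤ):ℂ) * (x:ℝ) : ℂ) =
        (-((2*π*(n:ℝ)*x : ℝ):ℂ) * Complex.I) + (-(2*(π:ℂ)*Complex.I*(m:ℂ)*(x:ℂ))) by
          push_cast; ring,
      show (2 * (π:ℂ) * Complex.I * (((n:ℤ)-m : ℤ):ℂ) * (x:ℝ) : ℂ) =
        (((2*π*(n:ℝ)*x : ℝ):ℂ) * Complex.I) + (-(2*(π:ℂ)*Complex.I*(m:ℂ)*(x:ℂ))) by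
          push_cast; ring,
      Complex.exp_add, Complex.exp_add]
    ring
  rw [intervalIntegral.integral_congr (fun x _ => key x)]
  have hint : ∀ c : ℤ, IntervalIntegrable
      (fun x : ℝ => Complex.exp (2 * (π:ℂ) * Complex.I * (c:ℂ) * (x:ℝ))) volume 0 1 := by
    intro c; apply Continuous.intervalIntegrable; fun_prop
  rw [intervalIntegral.integral_const_mul, intervalIntegral.integral_sub (hint _) (hint _),
    exp_orth, exp_orth]
  have h1 : ¬(-(n:ℤ) - m = 0) := by omega
  rcases eq_or_ne n m with h | h
  · rw [if_pos h, if_neg h1, if_pos (by omega : (n:ℤ) - m = 0)]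
    ring
  · rw [if_neg h, if_neg h1, if_neg (by omega : ¬((n:ℤ) - m = 0))]
    ring

-- Part 3: Fourier transform computations

lemma term_norm_le (k : ℕ) (θ : ℝ) : ‖Aco k * Real.sin θ‖ ≤ Aco k := by
  rw [norm_mul, Real.norm_eq_abs, Real.norm_eq_abs, abs_of_pos (Aco_pos k)]
  calc Aco k * |Real.sin θ| ≤ Aco k * 1 :=
        mul_le_mul_of_nonneg_left (Real.abs_sin_le_one _) (Aco_pos k).le
    _ = Aco k := mul_one _

lemma norm_E (r : ℝ) : ‖Complex.exp (-(2 * (π:ℂ) * Complex.I * (r:ℂ)))‖ = 1 := by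
  rw [Complex.norm_exp]
  have : (-(2 * (π:ℂ) * Complex.I * (r:ℂ))).re = 0 := by simp
  rw [this, Real.exp_zero]

lemma swap_tsum {E : Type*} [NormedAddCommGroup E] [NormedSpace ℝ E] (F : ℕ → ℝ → E)
    (hcont : ∀ k, Continuous (F k)) (hb : ∀ k x, ‖F k x‖ ≤ Aco k) :
    ∫ x in (0:ℝ)..1, (∑' k, F k x) = ∑' k, ∫ x in (0:ℝ)..1, F k x := by
  have hint : ∀ k, Integrable (F k) (volume.restrict (Set.Ioc (0:ℝ) 1)) := fun k =>
    ((hcont k).integrableOn_Icc).mono_set Set.Ioc_subset_Icc_self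
  have hsum : Summable fun k => ∫ x, ‖F k x‖ ∂(volume.restrict (Set.Ioc (0:ℝ) 1)) := by
    apply summable_Aco.of_nonneg_of_le
      (fun k => integral_nonneg (fun x => norm_nonneg _))
    intro k
    calc ∫ x, ‖F k x‖ ∂(volume.restrict (Set.Ioc (0:ℝ) 1))
        ≤ ∫ _x, Aco k ∂(volume.restrict (Set.Ioc (0:ℝ) 1)) :=
          integral_mono (hint k).norm (integrable_const _) (fun x => hb k x)
      _ = Aco k := by simp [Real.volume_Ioc]
  rw [intervalIntegral.integral_of_le zero_le_one,
    ← integral_tsum_of_summable_integral_norm hint hsum]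
  exact tsum_congr fun k => (intervalIntegral.integral_of_le zero_le_one).symm

lemma integral_gdens : ∫ x in (0:ℝ)..1, gdens x = 1 := by
  have hg : ∀ x : ℝ, gdens x = 1 + ∑' k : ℕ, Aco k * Real.sin (2 * π * (Nfr k) * x) :=
    gdens_eq
  rw [intervalIntegral.integral_congr (fun x _ => hg x)]
  have hT : Continuous (fun x : ℝ => ∑' k : ℕ, Aco k * Real.sin (2 * π * (Nfr k) * x)) := by
    have : (fun x : ℝ => ∑' k : ℕ, Aco k * Real.sin (2 * π * (Nfr k) * x)) =
        fun x => gdens x - 1 := by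
      funext x; rw [hg x]; ring
    rw [this]; exact continuous_gdens.sub continuous_const
  rw [intervalIntegral.integral_add (intervalIntegrable_const) (hT.intervalIntegrable 0 1)]
  rw [swap_tsum _ (fun k => by fun_prop) (fun k x => term_norm_le k _)]
  have : ∀ k : ℕ, ∫ x in (0:ℝ)..1, Aco k * Real.sin (2 * π * (Nfr k) * x) = 0 := by
    intro k
    rw [intervalIntegral.integral_const_mul, sin_integral_zero, mul_zero]
  rw [tsum_congr this, tsum_zero]
  simp

lemma measure_density (d : ℝ → ℝ) (hcont : Continuous d) (hpos : ∀ x, 0 ≤ d x)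
    (s : Set ℝ) (hs : MeasurableSet s) (hsub : Set.Icc (0:ℝ) 1 ⊆ s) :
    ((volume.restrict (Set.Icc (0:ℝ) 1)).withDensity
      (fun x => ENNReal.ofReal (d x))) s = ENNReal.ofReal (∫ x in (0:ℝ)..1, d x) := by
  rw [withDensity_apply _ hs, Measure.restrict_restrict hs,
    Set.inter_eq_self_of_subset_right hsub,
    ← ofReal_integral_eq_lintegral_ofReal (hcont.integrableOn_Icc)
      (Filter.Eventually.of_forall hpos)]
  congr 1
  rw [integral_Icc_eq_integral_Ioc, intervalIntegral.integral_of_le zero_le_one]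

lemma FT_density (d : ℝ → ℝ) (hd : Measurable d) (hpos : ∀ x, 0 ≤ d x) (ξ : ℝ) :
    FT1 ((volume.restrict (Set.Icc (0:ℝ) 1)).withDensity (fun x => ENNReal.ofReal (d x))) ξ
      = ∫ x in (0:ℝ)..1, (d x : ℂ) *
        Complex.exp (-(2 * (π:ℂ) * Complex.I * ((ξ * x : ℝ) : ℂ))) := by
  unfold FT1
  have h1 : (fun x : ℝ => ENNReal.ofReal (d x)) =
      (fun x : ℝ => ((Real.toNNReal (d x) : ℝ≥0) : ℝ≥0∞)) := rfl
  rw [h1, integral_withDensity_eq_integral_smul hd.real_toNNReal]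
  rw [intervalIntegral.integral_of_le zero_le_one, ← integral_Icc_eq_integral_Ioc]
  apply setIntegral_congr_fun (measurableSet_Icc)
  intro x _
  show (d x).toNNReal • Complex.exp _ = _
  rw [NNReal.smul_def, Real.coe_toNNReal _ (hpos x), Complex.real_smul]

lemma Nfr_pos (k : ℕ) : 0 < Nfr k := pow_pos (by norm_num) _

lemma exp_int_zero (m : ℤ) (hm : m ≠ 0) :
    ∫ x in (0:ℝ)..1, Complex.exp (-(2 * (π:ℂ) * Complex.I * (((m : ℝ) * x : ℝ) : ℂ))) = 0 := by
  have : ∀ x : ℝ, Complex.exp (-(2 * (π:ℂ) * Complex.I * (((m : ℝ) * x : ℝ) : ℂ))) =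
      Complex.exp (2 * (π:ℂ) * Complex.I * ((-m : ℤ):ℂ) * (x:ℂ)) := by
    intro x; congr 1; push_cast; ring
  rw [intervalIntegral.integral_congr (fun x _ => this x), exp_orth, if_neg (by omega)]

lemma gdens_exp_integral (k : ℕ) :
    ∫ x in (0:ℝ)..1, (gdens x : ℂ) *
      Complex.exp (-(2 * (π:ℂ) * Complex.I * ((((Nfr k : ℝ)) * x : ℝ) : ℂ)))
      = (Aco k) * (-(Complex.I/2)) := by
  set E : ℝ → ℂ := fun x =>
    Complex.exp (-(2 * (π:ℂ) * Complex.I * ((((Nfr k : ℝ)) * x : ℝ) : ℂ))) with hE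
  have hEcont : Continuous E := by unfold E; fun_prop
  have key : ∀ x : ℝ, (gdens x : ℂ) * E x =
      E x + ∑' j : ℕ, ((Aco j * Real.sin (2 * π * (Nfr j) * x) : ℝ) : ℂ) * E x := by
    intro x
    rw [gdens_eq x, Complex.ofReal_add, Complex.ofReal_one, Complex.ofReal_tsum, add_mul,
      one_mul]
    congr 1
    exact ((((summable_term x).map (Complex.ofRealHom.toAddMonoidHom) Complex.continuous_ofReal)).tsum_mul_right (E x)).symm
  rw [intervalIntegral.integral_congr (fun x _ => key x)]
  have hTsum : Continuous (fun x : ℝ =>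
      ∑' j : ℕ, ((Aco j * Real.sin (2 * π * (Nfr j) * x) : ℝ) : ℂ) * E x) := by
    have : (fun x : ℝ =>
        ∑' j : ℕ, ((Aco j * Real.sin (2 * π * (Nfr j) * x) : ℝ) : ℂ) * E x) =
        fun x => ((gdens x - 1 : ℝ) : ℂ) * E x := by
      funext x
      rw [show ((gdens x - 1 : ℝ):ℂ) = ((gdens x :ℂ) - 1) by push_cast; ring, sub_mul, one_mul,
        key x]
      ring
    rw [this]
    exact ((Complex.continuous_ofReal.comp (continuous_gdens.sub continuous_const)).mul hEcont)
  rw [intervalIntegral.integral_add (hEcont.intervalIntegrable 0 1)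
    (hTsum.intervalIntegrable 0 1)]
  have hE0 : ∫ x in (0:ℝ)..1, E x = 0 := by
    have h := exp_int_zero (Nfr k : ℤ) (by exact_mod_cast (Nfr_pos k).ne')
    rw [← h]
    apply intervalIntegral.integral_congr
    intro x _
    show E x = _
    unfold E
    norm_cast
  rw [hE0, zero_add]
  rw [swap_tsum _ (fun j => by
      exact (Complex.continuous_ofReal.comp (by fun_prop)).mul hEcont)
    (fun j x => by
      rw [norm_mul]
      unfold E
      rw [norm_E, mul_one, Complex.norm_real]
      exact term_norm_le j _)]
  have hterm : ∀ j : ℕ,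
      (∫ x in (0:ℝ)..1, ((Aco j * Real.sin (2 * π * (Nfr j) * x) : ℝ) : ℂ) * E x)
      = Aco j * (if Nfr j = Nfr k then -(Complex.I/2) else 0) := by
    intro j
    have : ∀ x : ℝ, ((Aco j * Real.sin (2 * π * (Nfr j) * x) : ℝ) : ℂ) * E x =
        (Aco j : ℂ) * ((Real.sin (2 * π * (Nfr j) * x) : ℂ) *
          Complex.exp (-(2 * (π:ℂ) * Complex.I * ((Nfr k : ℕ):ℂ) * (x:ℂ)))) := by
      intro x
      unfold E
      push_cast
      ring
    rw [intervalIntegral.integral_congr (fun x _ => this x),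
      intervalIntegral.integral_const_mul, sin_orth _ _ (Nfr_pos j) (Nfr_pos k)]
  rw [tsum_congr hterm, tsum_eq_single k ?_, if_pos rfl]
  intro j hj
  rw [if_neg, mul_zero]
  intro hEq
  apply hj
  have h1 := Nat.pow_right_injective (le_refl 2) hEq
  have h2 := Nat.pow_left_injective (by norm_num) h1
  omega

-- Part 4: dimension computations

def Sset (ρ : Measure ℝ) : Set ℝ :=
  {s : ℝ | 0 ≤ s ∧ s ≤ 1 ∧ ∃ C : ℝ, ∀ ξ : ℝ, ξ ≠ 0 →
    ‖FT1 ρ ξ‖ ≤ C * ‖ξ‖ ^ (-s / 2)}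

lemma fDim1_eq (ρ : Measure ℝ) : fDim1 ρ = sSup (Sset ρ) := rfl

lemma bddAbove_Sset (ρ : Measure ℝ) : BddAbove (Sset ρ) :=
  ⟨1, fun _ hs => hs.2.1⟩

lemma zero_mem_Sset (ρ : Measure ℝ) [IsFiniteMeasure ρ] : 0 ∈ Sset ρ := by
  refine ⟨le_refl _, zero_le_one, (ρ Set.univ).toReal, fun ξ hξ => ?_⟩
  rw [neg_zero, zero_div, Real.rpow_zero, mul_one]
  calc ‖FT1 ρ ξ‖ ≤ ∫ x, ‖Complex.exp (-(2 * (π:ℂ) * Complex.I * ((ξ * x : ℝ):ℂ)))‖ ∂ρ :=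
        norm_integral_le_integral_norm _
    _ = ∫ _x, (1:ℝ) ∂ρ := by
        congr 1; funext x; exact norm_E _
    _ = (ρ Set.univ).toReal := by simp [measureReal_def]

lemma rpow_ge_half_self {x : ℝ} (hx : 0 ≤ x) : x / 2 ≤ (2:ℝ) ^ x := by
  rw [Real.rpow_def_of_pos (by norm_num)]
  have h1 : Real.log 2 * x + 1 ≤ Real.exp (Real.log 2 * x) := Real.add_one_le_exp _
  have h2 : (0.6931471803 : ℝ) < Real.log 2 := Real.log_two_gt_d9
  nlinarith [Real.exp_pos (Real.log 2 * x)]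

lemma no_decay (ρ : Measure ℝ) (hval : ∀ k : ℕ, ‖FT1 ρ (Nfr k)‖ = Aco k / 2)
    (s : ℝ) (hs : 0 < s) (C : ℝ) :
    ¬ (∀ ξ : ℝ, ξ ≠ 0 → ‖FT1 ρ ξ‖ ≤ C * ‖ξ‖ ^ (-s / 2)) := by
  intro H
  obtain ⟨k, hk⟩ := exists_nat_ge (4/s + 4*|C| + 4)
  have hNpos : (0:ℝ) < (Nfr k : ℝ) := by exact_mod_cast Nfr_pos k
  have hH := H (Nfr k) (ne_of_gt hNpos)
  rw [hval k, Real.norm_eq_abs, abs_of_pos hNpos] at hH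
  have hA : Aco k / 2 = (2:ℝ) ^ (-((k:ℝ)+2)) := by
    rw [← Aco_eq]
    rw [show (-((k:ℝ)+2)) = (-((k:ℝ)+1)) + (-1) by ring,
      Real.rpow_add (by norm_num), Real.rpow_neg_one]
    ring
  have hN : ((Nfr k : ℝ)) ^ (-s/2) = (2:ℝ) ^ ((((k:ℝ)+1)^2) * (-s/2)) := by
    rw [← Nfr_eq, ← Real.rpow_mul (by norm_num)]
  set x0 : ℝ := s*((k:ℝ)+1)^2/2 - ((k:ℝ)+2) with hx0def
  have hexp : ((((k:ℝ)+1)^2) * (-s/2)) = -((k:ℝ)+2) - x0 := by rw [hx0def]; ring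
  rw [hA, hN, hexp, Real.rpow_sub (by norm_num)] at hH
  have hpow_pos : (0:ℝ) < (2:ℝ)^(-((k:ℝ)+2)) := Real.rpow_pos_of_pos (by norm_num) _
  have hq_pos : (0:ℝ) < (2:ℝ)^x0 := Real.rpow_pos_of_pos (by norm_num) _
  -- derive 2^x0 ≤ C
  have h3 : (2:ℝ)^(-((k:ℝ)+2)) * (2:ℝ)^x0 ≤ C * (2:ℝ)^(-((k:ℝ)+2)) := by
    have h := mul_le_mul_of_nonneg_right hH hq_pos.le
    have heq : C * ((2:ℝ) ^ (-((k:ℝ) + 2)) / 2 ^ x0) * 2 ^ x0 = C * 2 ^ (-((k:ℝ)+2)) := by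
      field_simp
    rwa [heq] at h
  have key : (2:ℝ)^x0 ≤ C := by
    rw [mul_comm C _] at h3
    exact (mul_le_mul_iff_right₀ hpow_pos).mp h3
  -- x0 is large
  have habs : (0:ℝ) ≤ |C| := abs_nonneg C
  have hdivpos : (0:ℝ) < 4/s := by positivity
  have hk1 : 4/s ≤ (k:ℝ) := by linarith
  have h4 : (4:ℝ) ≤ s * (k:ℝ) := by
    rw [div_le_iff₀ hs] at hk1; linarith [hk1]
  have h42 : 2*((k:ℝ)+1) ≤ s*((k:ℝ)+1)^2/2 := by nlinarith [Nat.cast_nonneg (α := ℝ) k]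
  have hx0ge : 4*|C| + 4 ≤ x0 := by
    rw [hx0def]
    have : 4*|C| + 4 ≤ (k:ℝ) := by linarith
    linarith
  have hq : x0/2 ≤ (2:ℝ)^x0 := rpow_ge_half_self (by linarith)
  have : C ≤ |C| := le_abs_self C
  linarith

-- Part 5: the specific measures

def muMeas : Measure ℝ :=
  (volume.restrict (Set.Icc (0:ℝ) 1)).withDensity (fun x => ENNReal.ofReal (gdens x))

def nuMeas : Measure ℝ :=
  (volume.restrict (Set.Icc (0:ℝ) 1)).withDensity (fun x => ENNReal.ofReal (hdens x))

lemma integral_hdens : ∫ x in (0:ℝ)..1, hdens x = 1 := by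
  have : ∀ x ∈ Set.uIcc (0:ℝ) 1, hdens x = 2 - gdens x := fun x _ => rfl
  rw [intervalIntegral.integral_congr this,
    intervalIntegral.integral_sub intervalIntegrable_const
      (continuous_gdens.intervalIntegrable 0 1), integral_gdens]
  norm_num

lemma mu_apply (s : Set ℝ) (hs : MeasurableSet s) (hsub : Set.Icc (0:ℝ) 1 ⊆ s) :
    muMeas s = 1 := by
  rw [muMeas, measure_density gdens continuous_gdens gdens_nonneg s hs hsub, integral_gdens,
    ENNReal.ofReal_one]

lemma nu_apply (s : Set ℝ) (hs : MeasurableSet s) (hsub : Set.Icc (0:ℝ) 1 ⊆ s) :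
    nuMeas s = 1 := by
  rw [nuMeas, measure_density hdens continuous_hdens hdens_nonneg s hs hsub, integral_hdens,
    ENNReal.ofReal_one]

instance prob_mu : IsProbabilityMeasure muMeas :=
  ⟨mu_apply _ MeasurableSet.univ (Set.subset_univ _)⟩

instance prob_nu : IsProbabilityMeasure nuMeas :=
  ⟨nu_apply _ MeasurableSet.univ (Set.subset_univ _)⟩

lemma FT_mu (ξ : ℝ) : FT1 muMeas ξ = ∫ x in (0:ℝ)..1, (gdens x : ℂ) *
    Complex.exp (-(2 * (π:ℂ) * Complex.I * ((ξ * x : ℝ):ℂ))) :=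
  FT_density gdens continuous_gdens.measurable gdens_nonneg ξ

lemma FT_nu (ξ : ℝ) : FT1 nuMeas ξ =
    2 * (∫ x in (0:ℝ)..1, Complex.exp (-(2 * (π:ℂ) * Complex.I * ((ξ * x : ℝ):ℂ))))
      - FT1 muMeas ξ := by
  rw [FT_mu, nuMeas, FT_density hdens continuous_hdens.measurable hdens_nonneg ξ,
    ← intervalIntegral.integral_const_mul,
    ← intervalIntegral.integral_sub (by apply Continuous.intervalIntegrable; fun_prop)
      (by apply Continuous.intervalIntegrable;
          exact (Complex.continuous_ofReal.comp continuous_gdens).mul (by fun_prop))]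
  apply intervalIntegral.integral_congr
  intro x _
  show ((hdens x : ℝ):ℂ) * _ = _
  rw [hdens, show ((2 - gdens x : ℝ):ℂ) = 2 - (gdens x :ℂ) by push_cast; ring]
  ring

lemma E_int_zero (k : ℕ) :
    ∫ x in (0:ℝ)..1,
      Complex.exp (-(2 * (π:ℂ) * Complex.I * (((Nfr k : ℝ) * x : ℝ):ℂ))) = 0 := by
  have h := exp_int_zero (Nfr k : ℤ) (by exact_mod_cast (Nfr_pos k).ne')
  rw [← h]
  apply intervalIntegral.integral_congr
  intro x _
  norm_num

lemma mu_val (k : ℕ) : ‖FT1 muMeas (Nfr k)‖ = Aco k / 2 := by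
  rw [FT_mu, gdens_exp_integral k, norm_mul, Complex.norm_real, Real.norm_eq_abs,
    abs_of_pos (Aco_pos k), norm_neg, norm_div]
  simp [Complex.norm_I]
  ring

lemma nu_val (k : ℕ) : ‖FT1 nuMeas (Nfr k)‖ = Aco k / 2 := by
  rw [FT_nu, E_int_zero, mul_zero, zero_sub, norm_neg]
  exact mu_val k

lemma integrable_E (ρ : Measure ℝ) [IsFiniteMeasure ρ] (ξ : ℝ) :
    Integrable (fun x : ℝ => Complex.exp (-(2 * (π:ℂ) * Complex.I * ((ξ * x : ℝ):ℂ)))) ρ := by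
  apply Integrable.mono' (integrable_const (1:ℝ))
  · exact Continuous.aestronglyMeasurable (by fun_prop)
  · exact Filter.Eventually.of_forall fun x => le_of_eq (norm_E _)

lemma FT_add (ξ : ℝ) : FT1 (muMeas + nuMeas) ξ =
    2 * (∫ x in (0:ℝ)..1, Complex.exp (-(2 * (π:ℂ) * Complex.I * ((ξ * x : ℝ):ℂ)))) := by
  show (∫ x, _ ∂(muMeas + nuMeas)) = _
  rw [integral_add_measure (integrable_E muMeas ξ) (integrable_E nuMeas ξ)]
  have h1 : (∫ x, Complex.exp (-(2 * (π:ℂ) * Complex.I * ((ξ * x : ℝ):ℂ))) ∂muMeas) =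
      FT1 muMeas ξ := rfl
  have h2 : (∫ x, Complex.exp (-(2 * (π:ℂ) * Complex.I * ((ξ * x : ℝ):ℂ))) ∂nuMeas) =
      FT1 nuMeas ξ := rfl
  rw [h1, h2, FT_nu]
  ring

lemma int_E_bound (ξ : ℝ) (hξ : ξ ≠ 0) :
    ‖∫ x in (0:ℝ)..1, Complex.exp (-(2 * (π:ℂ) * Complex.I * ((ξ * x : ℝ):ℂ)))‖
      ≤ 1 / (π * |ξ|) := by
  have hc : (-(2 * (π:ℂ) * Complex.I * (ξ:ℂ))) ≠ 0 := by
    simp [Complex.ext_iff, Real.pi_ne_zero, hξ, Complex.I_ne_zero]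
  have hrw : ∀ x : ℝ, Complex.exp (-(2 * (π:ℂ) * Complex.I * ((ξ * x : ℝ):ℂ))) =
      Complex.exp ((-(2 * (π:ℂ) * Complex.I * (ξ:ℂ))) * (x:ℂ)) := by
    intro x; congr 1; push_cast; ring
  rw [intervalIntegral.integral_congr (fun x _ => hrw x), integral_exp_mul_complex hc]
  rw [norm_div]
  have hnorm_c : ‖(-(2 * (π:ℂ) * Complex.I * (ξ:ℂ)))‖ = 2 * π * |ξ| := by
    simp [map_mul, Complex.norm_I, Complex.norm_real,
      abs_of_pos Real.pi_pos]
  have hnum : ‖Complex.exp (-(2 * (π:ℂ) * Complex.I * (ξ:ℂ)) * ((1:ℝ):ℂ)) -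
      Complex.exp (-(2 * (π:ℂ) * Complex.I * (ξ:ℂ)) * ((0:ℝ):ℂ))‖ ≤ 2 := by
    apply (norm_sub_le _ _).trans
    have e1 : ‖Complex.exp (-(2 * (π:ℂ) * Complex.I * (ξ:ℂ)) * ((1:ℝ):ℂ))‖ = 1 := by
      rw [show (-(2 * (π:ℂ) * Complex.I * (ξ:ℂ)) * ((1:ℝ):ℂ)) =
        -(2 * (π:ℂ) * Complex.I * ((ξ:ℝ):ℂ)) by push_cast; ring]
      exact norm_E ξ
    have e2 : ‖Complex.exp (-(2 * (π:ℂ) * Complex.I * (ξ:ℂ)) * ((0:ℝ):ℂ))‖ = 1 := by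
      rw [show (-(2 * (π:ℂ) * Complex.I * (ξ:ℂ)) * ((0:ℝ):ℂ)) =
        -(2 * (π:ℂ) * Complex.I * (((0:ℝ)):ℂ)) by push_cast; ring]
      exact norm_E 0
    rw [e1, e2]; norm_num
  rw [hnorm_c]
  have hd : (0:ℝ) < 2 * π * |ξ| := by
    have hp := Real.pi_pos
    have ha : (0:ℝ) < |ξ| := abs_pos.mpr hξ
    positivity
  calc ‖Complex.exp (-(2 * (π:ℂ) * Complex.I * (ξ:ℂ)) * ((1:ℝ):ℂ)) -
      Complex.exp (-(2 * (π:ℂ) * Complex.I * (ξ:ℂ)) * ((0:ℝ):ℂ))‖ / (2 * π * |ξ|)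
      ≤ 2 / (2 * π * |ξ|) := by gcongr
    _ = 1 / (π * |ξ|) := by
        have hp := Real.pi_pos
        have ha : (0:ℝ) < |ξ| := abs_pos.mpr hξ
        field_simp

lemma one_mem_Sset : (1:ℝ) ∈ Sset (muMeas + nuMeas) := by
  refine ⟨zero_le_one, le_refl _, 2, fun ξ hξ => ?_⟩
  rw [FT_add, norm_mul]
  have h2 : ‖(2:ℂ)‖ = 2 := by norm_num
  rw [h2]
  have habs : 0 < |ξ| := abs_pos.mpr hξ
  rcases le_or_gt (|ξ|) 1 with hle | hgt
  · -- small ξ : trivial bound by 2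
    have hb : ‖∫ x in (0:ℝ)..1,
        Complex.exp (-(2 * (π:ℂ) * Complex.I * ((ξ * x : ℝ):ℂ)))‖ ≤ 1 := by
      have := intervalIntegral.norm_integral_le_of_norm_le_const
        (C := 1) (f := fun x : ℝ => Complex.exp (-(2 * (π:ℂ) * Complex.I * ((ξ * x : ℝ):ℂ))))
        (a := 0) (b := 1) (fun x _ => le_of_eq (norm_E _))
      simpa using this
    have hrp : (1:ℝ) ≤ ‖ξ‖ ^ (-(1:ℝ)/2) := by
      rw [Real.norm_eq_abs]
      apply Real.one_le_rpow_of_pos_of_le_one_of_nonpos habs hle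
      norm_num
    nlinarith
  · -- large ξ
    have hb := int_E_bound ξ hξ
    have hπ : (1:ℝ) ≤ π := by linarith [Real.pi_gt_three]
    have h1 : 1/(π * |ξ|) ≤ 1/|ξ| := by
      apply one_div_le_one_div_of_le habs
      nlinarith
    have h2' : (1:ℝ)/|ξ| = |ξ| ^ (-(1:ℝ)) := by
      rw [Real.rpow_neg_one]; exact (one_div _)
    have h3 : |ξ| ^ (-(1:ℝ)) ≤ |ξ| ^ (-(1:ℝ)/2) := by
      apply Real.rpow_le_rpow_of_exponent_le hgt.le
      norm_num
    rw [Real.norm_eq_abs]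
    nlinarith [hb, h1, h3]

-- Part 6: conclusion

lemma fDim_mu : fDim1 muMeas = 0 := by
  rw [fDim1_eq]
  apply le_antisymm
  · apply Real.sSup_le _ (le_refl 0)
    intro x hx
    by_contra hpos
    push_neg at hpos
    obtain ⟨C, hC⟩ := hx.2.2
    exact no_decay muMeas mu_val x hpos C hC
  · exact le_csSup (bddAbove_Sset _) (zero_mem_Sset _)

lemma fDim_nu : fDim1 nuMeas = 0 := by
  rw [fDim1_eq]
  apply le_antisymm
  · apply Real.sSup_le _ (le_refl 0)
    intro x hx
    by_contra hpos
    push_neg at hpos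
    obtain ⟨C, hC⟩ := hx.2.2
    exact no_decay nuMeas nu_val x hpos C hC
  · exact le_csSup (bddAbove_Sset _) (zero_mem_Sset _)

lemma fDim_add : fDim1 (muMeas + nuMeas) = 1 := by
  rw [fDim1_eq]
  apply le_antisymm
  · exact Real.sSup_le (fun x hx => hx.2.1) zero_le_one
  · exact le_csSup (bddAbove_Sset _) one_mem_Sset

theorem stmt9 :
    ∃ μ ν : Measure ℝ,
      μ = (volume.restrict (Set.Icc (0:ℝ) 1)).withDensity
            (fun x => ENNReal.ofReal (gdens x)) ∧
      ν = (volume.restrict (Set.Icc (0:ℝ) 1)).withDensity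
            (fun x => ENNReal.ofReal (hdens x)) ∧
      IsProbabilityMeasure μ ∧ IsProbabilityMeasure ν ∧
      μ (Set.Icc (0:ℝ) 1) = 1 ∧ ν (Set.Icc (0:ℝ) 1) = 1 ∧
      fDim1 μ = 0 ∧ fDim1 ν = 0 ∧ fDim1 (μ + ν) = 1 :=
  ⟨muMeas, nuMeas, rfl, rfl, prob_mu, prob_nu,
    mu_apply _ measurableSet_Icc (subset_refl _),
    nu_apply _ measurableSet_Icc (subset_refl _), fDim_mu, fDim_nu, fDim_add⟩

end
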